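/- Let Λ be a countable abelian group. Suppose that every finite subset S of Λ is contained in a subgroup H ≤ Λ such that H is free abelian and the quotient Λ/H is torsion-free. Then Λ is free abelian. -/

import Mathlib

open Submodule Set

section Aux

variable {Λ : Type*} [AddCommGroup Λ]

/-- The saturation (pure closure) of a submodule. -/
def mySat (p : Submodule ℤ Λ) : Submodule ℤ Λ where
  carrier := {x | ∃ c : ℤ, c ≠ 0 ∧ c • x ∈ p}
  add_mem' := by
    rintro x y ⟨c, hc, hcx⟩ ⟨d, hd, hdy⟩
    refine ⟨c * d, mul_ne_zero hc hd, ?_⟩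
    have h1 : (c * d) • (x + y) = d • (c • x) + c • (d • y) := by
      rw [smul_add]
      rw [show (c*d) • x = d • (c • x) by rw [mul_comm, mul_smul],
        show (c*d) • y = c • (d • y) by rw [mul_smul]]
    rw [h1]
    exact add_mem (p.smul_mem d hcx) (p.smul_mem c hdy)
  zero_mem' := ⟨1, one_ne_zero, by simp⟩
  smul_mem' := by
    rintro z x ⟨c, hc, hcx⟩
    exact ⟨c, hc, by rw [smul_comm]; exact p.smul_mem z hcx⟩

lemma mem_mySat {p : Submodule ℤ Λ} {x : Λ} :
    x ∈ mySat p ↔ ∃ c : ℤ, c ≠ 0 ∧ c • x ∈ p := Iff.rfl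

lemma le_mySat (p : Submodule ℤ Λ) : p ≤ mySat p :=
  fun x hx => ⟨1, one_ne_zero, by simpa using hx⟩

lemma mySat_mono {p q : Submodule ℤ Λ} (hpq : p ≤ q) : mySat p ≤ mySat q := by
  rintro x ⟨c, hc, hcx⟩; exact ⟨c, hc, hpq hcx⟩

lemma noZeroSMulDivisors_quot_mySat (p : Submodule ℤ Λ) :
    NoZeroSMulDivisors ℤ (Λ ⧸ mySat p) := by
  refine ⟨fun {c x} hcx => ?_⟩
  rcases eq_or_ne c 0 with rfl | hc
  · exact Or.inl rfl
  right
  obtain ⟨y, rfl⟩ := (mySat p).mkQ_surjective x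
  rw [← map_smul, Submodule.mkQ_apply, Submodule.Quotient.mk_eq_zero] at hcx
  rw [Submodule.mkQ_apply, Submodule.Quotient.mk_eq_zero]
  obtain ⟨d, hd, hdcy⟩ := hcx
  exact ⟨d * c, mul_ne_zero hd hc, by rwa [mul_smul]⟩

/-- Extension lemma: a linearly independent set spanning `K` extends to one spanning `K'`,
provided `K ≤ K'`, `Λ ⧸ K` is torsion-free and the image of `K'` in `Λ ⧸ K` is f.g. -/
lemma ext_basis (K K' : Submodule ℤ Λ) (hKK' : K ≤ K')
    [NoZeroSMulDivisors ℤ (Λ ⧸ K)] (hfg : (K'.map K.mkQ).FG)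
    (s : Set Λ) (hs : LinearIndependent ℤ (fun x => x : s → Λ))
    (hsp : span ℤ s = K) :
    ∃ t : Set Λ, s ⊆ t ∧ LinearIndependent ℤ (fun x => x : t → Λ) ∧ span ℤ t = K' := by
  classical
  set Q : Submodule ℤ (Λ ⧸ K) := K'.map K.mkQ with hQdef
  haveI : Module.Finite ℤ Q := Module.Finite.iff_fg.2 hfg
  haveI : Module.Free ℤ Q := Module.free_of_finite_type_torsion_free'
  let b := Module.Free.chooseBasis ℤ Q
  set ι := Module.Free.ChooseBasisIndex ℤ Q
  have hlift : ∀ i : ι, ∃ y, y ∈ K' ∧ K.mkQ y = (b i : Λ ⧸ K) := by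
    intro i
    obtain ⟨y, hy, hy2⟩ := (b i).2
    exact ⟨y, hy, hy2⟩
  choose y hyK' hymk using hlift
  -- linear independence of the lifted family
  have hbQ : LinearIndependent ℤ (fun i => (b i : Λ ⧸ K)) := by
    have := b.linearIndependent.map' Q.subtype (Submodule.ker_subtype Q)
    exact this
  have hycomp : (K.mkQ : Λ →ₗ[ℤ] Λ ⧸ K) ∘ y = fun i => (b i : Λ ⧸ K) := funext hymk
  have hyli : LinearIndependent ℤ y := by
    refine LinearIndependent.of_comp K.mkQ ?_
    rw [hycomp]; exact hbQ
  -- key computation: mkQ of a combination of the `y`s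
  have hcombo : ∀ c : ι →₀ ℤ, K.mkQ (c.sum fun i a => a • y i)
      = Q.subtype (Finsupp.linearCombination ℤ b c) := by
    intro c
    rw [map_finsuppSum, Finsupp.linearCombination_apply, map_finsuppSum]
    refine Finsupp.sum_congr fun i _ => ?_
    rw [map_smul, hymk]; rfl
  -- disjointness of the spans
  have hdisj : Disjoint (span ℤ s) (span ℤ (Set.range y)) := by
    rw [disjoint_def]
    intro z hz1 hz2
    obtain ⟨c, hc⟩ := Finsupp.mem_span_range_iff_exists_finsupp.1 hz2
    rw [hsp] at hz1
    have h0 : K.mkQ z = 0 := by rwa [Submodule.mkQ_apply, Submodule.Quotient.mk_eq_zero]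
    rw [← hc, hcombo] at h0
    have hc0 : Finsupp.linearCombination ℤ b c = 0 := by
      have := Submodule.injective_subtype Q
      exact this (by simpa using h0)
    have : c = 0 := linearIndependent_iff.1 b.linearIndependent c hc0
    rw [← hc, this, Finsupp.sum_zero_index]
  refine ⟨s ∪ Set.range y, Set.subset_union_left, ?_, ?_⟩
  · exact LinearIndepOn.id_union hs hyli.linearIndepOn_id hdisj
  · apply le_antisymm
    · rw [span_le]
      rintro x (hx | ⟨i, rfl⟩)
      · exact hKK' (hsp ▸ subset_span hx)
      · exact hyK' i
    · intro x hx
      have hq : K.mkQ x ∈ Q := Submodule.mem_map_of_mem hx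
      set q : Q := ⟨K.mkQ x, hq⟩ with hqdef
      set c := b.repr q with hcdef
      set w := c.sum fun i a => a • y i with hwdef
      have hw : w ∈ span ℤ (s ∪ Set.range y) := by
        rw [span_union]
        refine Submodule.mem_sup_right ?_
        exact Finsupp.mem_span_range_iff_exists_finsupp.2 ⟨c, rfl⟩
      have hxw : x - w ∈ span ℤ (s ∪ Set.range y) := by
        rw [span_union]
        refine Submodule.mem_sup_left ?_
        rw [hsp]
        have : K.mkQ (x - w) = 0 := by
          rw [map_sub, hwdef, hcombo, hcdef, Module.Basis.linearCombination_repr]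
          simp [hqdef]
        rwa [Submodule.mkQ_apply, Submodule.Quotient.mk_eq_zero] at this
      simpa using add_mem hxw hw

end Aux

/-- The saturation of the span of a finite set is finitely generated, under the
Pontryagin hypothesis. -/
lemma mySat_span_fg {Λ : Type*} [AddCommGroup Λ]
    (h : ∀ S : Finset Λ, ∃ H : AddSubgroup Λ, (S : Set Λ) ⊆ H ∧ Module.Free ℤ H ∧
      ∀ (x : Λ) (n : ℕ), 0 < n → n • x ∈ H → x ∈ H)
    (S : Finset Λ) : (mySat (span ℤ (S : Set Λ))).FG := by
  classical
  obtain ⟨H, hSH, hfree, hpure⟩ := h S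
  haveI := hfree
  let f : H →ₗ[ℤ] Λ := (H.subtype).toIntLinearMap
  have hfinj : Function.Injective f := Subtype.val_injective
  set p : Submodule ℤ Λ := span ℤ (S : Set Λ) with hpdef
  have hpH : ∀ x ∈ p, x ∈ H := by
    intro x hx
    have hle : p ≤ AddSubgroup.toIntSubmodule H := by
      rw [hpdef, span_le]; intro a ha; exact hSH ha
    exact hle hx
  have hmemH : ∀ x ∈ mySat p, x ∈ H := by
    rintro x ⟨c, hc, hcx⟩
    have hcxH : c • x ∈ H := hpH _ hcx
    have h2 : ((c.natAbs : ℤ)) • x = c • x ∨ ((c.natAbs : ℤ)) • x = -(c • x) := by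
      rcases Int.natAbs_eq c with hh | hh
      · exact Or.inl (congrArg (· • x) hh.symm)
      · refine Or.inr ?_
        rw [← neg_smul]
        exact congrArg (· • x) (by omega : (c.natAbs : ℤ) = -c)
    have key : ((c.natAbs : ℤ)) • x ∈ H := by
      rcases h2 with h2 | h2
      · rw [h2]; exact hcxH
      · rw [h2]; exact neg_mem hcxH
    rw [Nat.cast_smul_eq_nsmul] at key
    exact hpure x c.natAbs (Int.natAbs_pos.2 hc) key
  let b := Module.Free.chooseBasis ℤ H
  let T : Finset (Module.Free.ChooseBasisIndex ℤ H) :=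
    S.attach.biUnion (fun a => (b.repr ⟨a.1, hSH a.2⟩).support)
  set N : Submodule ℤ Λ := Submodule.map f (span ℤ (⇑b '' ↑T)) with hNdef
  have hSN : ∀ a ∈ S, a ∈ N := by
    intro a ha
    have hmem : (⟨a, hSH ha⟩ : H) ∈ span ℤ (⇑b '' ↑T) := by
      rw [b.mem_span_image]
      intro i hi
      exact Finset.mem_coe.2 (Finset.mem_biUnion.2 ⟨⟨a, ha⟩, S.mem_attach _, hi⟩)
    exact Submodule.mem_map_of_mem (f := f) hmem
  have hpN : p ≤ N := by
    rw [hpdef, span_le]; intro a ha; exact hSN a ha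
  have hKN : mySat p ≤ N := by
    rintro x hxK
    obtain ⟨c, hc, hcx⟩ := hxK
    have hxH : x ∈ H := hmemH x ⟨c, hc, hcx⟩
    set x' : H := ⟨x, hxH⟩ with hx'def
    have hcxN : f (c • x') ∈ N := by
      have : f (c • x') = c • x := by rw [map_smul]; rfl
      rw [this]; exact hpN hcx
    have hmap : c • x' ∈ span ℤ (⇑b '' ↑T) := by
      obtain ⟨z, hz, hze⟩ := hcxN
      have hzz : z = c • x' := hfinj hze
      rwa [hzz] at hz
    have hsupp := b.mem_span_image.1 hmap
    rw [map_smul, Finsupp.support_smul_eq hc] at hsupp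
    exact ⟨x', b.mem_span_image.2 hsupp, rfl⟩
  have hNfg : N.FG := by
    rw [hNdef, Submodule.map_span]
    exact Submodule.fg_span ((T.finite_toSet.image _).image _)
  haveI : IsNoetherian ℤ N := isNoetherian_of_fg_of_noetherian N hNfg
  have heq : mySat p = Submodule.map N.subtype (Submodule.comap N.subtype (mySat p)) := by
    rw [Submodule.map_comap_subtype, inf_eq_right.2 hKN]
  rw [heq]
  exact Submodule.FG.map _ (IsNoetherian.noetherian _)



/-- Pontryagin's criterion: a countable abelian group `Λ` is free abelian provided every
finite subset of `Λ` is contained in a free abelian subgroup `H` with `Λ/H` torsion-free. -/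
theorem stmt6 {Λ : Type*} [AddCommGroup Λ] [Countable Λ]
    (h : ∀ S : Finset Λ, ∃ H : AddSubgroup Λ, (S : Set Λ) ⊆ H ∧ Module.Free ℤ H ∧
      ∀ (x : Λ) (n : ℕ), 0 < n → n • x ∈ H → x ∈ H) :
    Module.Free ℤ Λ := by
  classical
  -- `Λ` is torsion-free
  haveI tf : NoZeroSMulDivisors ℤ Λ := by
    refine ⟨fun {c x} hcx => ?_⟩
    rcases eq_or_ne c 0 with rfl | hc
    · exact Or.inl rfl
    right
    obtain ⟨H, hxH, hfree, hpure⟩ := h {x}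
    haveI := hfree
    have hx : x ∈ H := hxH (by simp)
    have hz : c • (⟨x, hx⟩ : H) = 0 := Subtype.ext (by simpa using hcx)
    have hor : c = 0 ∨ (⟨x, hx⟩ : H) = 0 := by
      by_cases hx0 : (⟨x, hx⟩ : H) = 0
      · exact Or.inr hx0
      · exact Or.inl ((smul_eq_zero_iff_left hx0).1 hz)
    rcases hor with h0 | h0
    · exact absurd h0 hc
    · exact congrArg Subtype.val h0
  haveI : Nonempty Λ := ⟨0⟩
  obtain ⟨e, he⟩ := exists_surjective_nat Λ
  let K : ℕ → Submodule ℤ Λ := fun n => mySat (span ℤ (e '' Set.Iio n))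
  have hKmono : Monotone K := fun n m hnm =>
    mySat_mono (span_mono (Set.image_mono fun i (hi : i < n) => lt_of_lt_of_le hi hnm))
  have hKfg : ∀ n, (K n).FG := by
    intro n
    have himg : e '' Set.Iio n = (((Finset.range n).image e : Finset Λ) : Set Λ) := by
      simp [Finset.coe_image, Finset.coe_range]
    have hKn : K n = mySat (span ℤ ((((Finset.range n).image e) : Finset Λ) : Set Λ)) := by
      show mySat _ = _
      rw [himg]
    rw [hKn]
    exact mySat_span_fg h _
  have hKquot : ∀ n, NoZeroSMulDivisors ℤ (Λ ⧸ K n) := fun n =>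
    noZeroSMulDivisors_quot_mySat _
  have hK0 : K 0 = ⊥ := by
    rw [eq_bot_iff]
    rintro x ⟨c, hc, hcx⟩
    have hIio : Set.Iio (0 : ℕ) = ∅ := by ext i; simp
    have himg : e '' Set.Iio (0 : ℕ) = (∅ : Set Λ) := by rw [hIio, Set.image_empty]
    rw [himg, span_empty, Submodule.mem_bot] at hcx
    rcases eq_zero_or_eq_zero_of_smul_eq_zero hcx with h0 | h0
    · exact absurd h0 hc
    · exact Submodule.mem_bot ℤ |>.2 h0
  have step : ∀ n (s : Set Λ),
      (LinearIndependent ℤ (fun x => x : s → Λ) ∧ span ℤ s = K n) →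
      ∃ t, s ⊆ t ∧ (LinearIndependent ℤ (fun x => x : t → Λ) ∧ span ℤ t = K (n + 1)) := by
    intro n s hsp
    haveI := hKquot n
    obtain ⟨t, h1, h2, h3⟩ := ext_basis (K n) (K (n + 1)) (hKmono (Nat.le_succ n))
      (Submodule.FG.map _ (hKfg (n + 1))) s hsp.1 hsp.2
    exact ⟨t, h1, h2, h3⟩
  choose T hT1 hT2 using step
  let F : (n : ℕ) → {s : Set Λ // LinearIndependent ℤ (fun x => x : s → Λ) ∧ span ℤ s = K n} :=
    fun n => Nat.rec
      ⟨∅, linearIndependent_empty ℤ Λ, by rw [span_empty, hK0]⟩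
      (fun n ih => ⟨T n ih.1 ih.2, hT2 n ih.1 ih.2⟩) n
  have hchain : ∀ n, (F n).1 ⊆ (F (n + 1)).1 := fun n => hT1 n (F n).1 (F n).2
  have hmono : Monotone (fun n => (F n).1) := monotone_nat_of_le_succ hchain
  have hLI : LinearIndependent ℤ (fun x => x : (⋃ n, (F n).1) → Λ) :=
    linearIndepOn_iUnion_of_directed (v := id) hmono.directed_le (fun n => (F n).2.1)
  have hspan : ⊤ ≤ span ℤ (Set.range (fun x => x : (⋃ n, (F n).1) → Λ)) := by
    rw [Subtype.range_coe]
    intro x _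
    obtain ⟨m, rfl⟩ := he x
    have hx : e m ∈ K (m + 1) :=
      le_mySat _ (subset_span ⟨m, by simp, rfl⟩)
    have hEq : K (m + 1) = span ℤ (F (m + 1)).1 := ((F (m + 1)).2.2).symm
    exact span_mono (Set.subset_iUnion (fun n => (F n).1) (m + 1)) (hEq ▸ hx)
  exact Module.Free.of_basis (Module.Basis.mk hLI hspan)
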